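/- One iteration of the relocation center searching algorithm does not increase the objective: let C be a nonempty subset of V, let a : V → C assign to each point v a center a(v) ∈ C attaining min_{c ∈ C} d(c,v)·w(v), and let c' : C → V be such that for each j ∈ C, c'(j) minimizes u ↦ Σ_{v ∈ V, a(v) = j} d(u,v)·w(v) over all u ∈ V. Then the new center set C' = c'(C) (the image of c') satisfies F(C') ≤ F(C). -/
import Mathlib


/-- Relocation cost `F(C) = Σ_{v ∈ V} min_{c ∈ C} d(c,v)·w(v)` for a nonempty
finite set of centers `C` in a finite set of points `V`. -/
def relocCost {V : Type*} [Fintype V] (d : V → V → ℝ) (w : V → ℝ)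
    (C : Finset V) (hC : C.Nonempty) : ℝ :=
  ∑ v, C.inf' hC (fun c => d c v * w v)

/-- One iteration of the relocation center searching algorithm does not
increase the objective: if `a` assigns each point to a closest (weighted)
center of `C`, and for each `j ∈ C` the new center `c' j` minimizes
`u ↦ Σ_{v : a v = j} d(u,v)·w(v)` over all `u ∈ V`, then the image
`C' = c'(C)` satisfies `F(C') ≤ F(C)`. -/
theorem relocCost_iteration_le {V : Type*} [Fintype V] [DecidableEq V] [Nonempty V]
    (d : V → V → ℝ) (w : V → ℝ)
    (C : Finset V) (hC : C.Nonempty)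
    (a : V → V) (ha : ∀ v, a v ∈ C)
    (hamin : ∀ v, d (a v) v * w v = C.inf' hC (fun c => d c v * w v))
    (c' : V → V)
    (hc' : ∀ j ∈ C, ∀ u : V,
      ∑ v ∈ Finset.univ.filter (fun v => a v = j), d (c' j) v * w v ≤
      ∑ v ∈ Finset.univ.filter (fun v => a v = j), d u v * w v) :
    relocCost d w (C.image c') (hC.image c') ≤ relocCost d w C hC := by
  unfold relocCost
  calc ∑ v, (C.image c').inf' (hC.image c') (fun c => d c v * w v)
      ≤ ∑ v, d (c' (a v)) v * w v := by
        apply Finset.sum_le_sum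
        intro v _
        exact Finset.inf'_le _ (Finset.mem_image_of_mem c' (ha v))
    _ = ∑ j ∈ C, ∑ v ∈ Finset.univ.filter (fun v => a v = j), d (c' (a v)) v * w v := by
        rw [Finset.sum_fiberwise_of_maps_to (fun v _ => ha v)]
    _ ≤ ∑ j ∈ C, ∑ v ∈ Finset.univ.filter (fun v => a v = j), d (a v) v * w v := by
        apply Finset.sum_le_sum
        intro j hj
        calc ∑ v ∈ Finset.univ.filter (fun v => a v = j), d (c' (a v)) v * w v
            = ∑ v ∈ Finset.univ.filter (fun v => a v = j), d (c' j) v * w v := by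
              apply Finset.sum_congr rfl
              intro v hv
              rw [(Finset.mem_filter.mp hv).2]
          _ ≤ ∑ v ∈ Finset.univ.filter (fun v => a v = j), d j v * w v := hc' j hj j
          _ = ∑ v ∈ Finset.univ.filter (fun v => a v = j), d (a v) v * w v := by
              apply Finset.sum_congr rfl
              intro v hv
              rw [(Finset.mem_filter.mp hv).2]
    _ = ∑ v, d (a v) v * w v := Finset.sum_fiberwise_of_maps_to (fun v _ => ha v) _
    _ = ∑ v, C.inf' hC (fun c => d c v * w v) := by
        exact Finset.sum_congr rfl (fun v _ => hamin v)
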